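/- Fix n ≥ 1 and let E be the Euclidean space ℝ^{2n} indexed by Fin n ⊕ Fin n, and let J be the canonical symplectic matrix. Let B be a real (2n)×(2n) matrix that is infinitesimally symplectic, i.e. Bᵀ·J + J·B = 0, and let H : E → ℝ be differentiable and infinitesimally invariant under B, i.e. ⟪∇H(x), B.mulVec x⟫ = 0 for all x ∈ E. Define the momentum function F : E → ℝ by F(x) = −(1/2)·⟪x, J.mulVec(B.mulVec x)⟫. Then along any solution x : ℝ → E of Hamilton's equations, i.e. any x with HasDerivAt x (J.mulVec(∇H(x(t)))) t for all t ∈ ℝ, the momentum is conserved: F(x(t)) = F(x(0)) for all t ∈ ℝ. -/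

import Mathlib

open Matrix
open scoped RealInnerProductSpace

lemma euc_inner_eq_dot {ι : Type*} [Fintype ι] (a b : EuclideanSpace ℝ ι) :
    ⟪a, b⟫ = (a : ι → ℝ) ⬝ᵥ (b : ι → ℝ) := by
  simp [PiLp.inner_apply, dotProduct, mul_comm]

lemma dot_mulVec_mulVec {ι : Type*} [Fintype ι] [DecidableEq ι]
    (M N : Matrix ι ι ℝ) (a b : ι → ℝ) :
    (M.mulVec a) ⬝ᵥ (N.mulVec b) = a ⬝ᵥ ((Mᵀ * N).mulVec b) := by
  have h := Matrix.dotProduct_mulVec a Mᵀ (N.mulVec b)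
  rw [Matrix.vecMul_transpose] at h
  rw [← Matrix.mulVec_mulVec]
  exact h.symm

/-- Noether's theorem, linear phase space: if `B` is infinitesimally
symplectic (`Bᵀ·J + J·B = 0`) and `H` is infinitesimally invariant under `B`
(`⟪∇H(x), B·x⟫ = 0`), then the momentum `F(x) = −(1/2)·⟪x, J·B·x⟫` is conserved along
any solution of Hamilton's equations for `H`. -/
theorem noether_momentum_conservation (n : ℕ) (hn : 1 ≤ n)
    (B : Matrix (Fin n ⊕ Fin n) (Fin n ⊕ Fin n) ℝ)
    (hB : Bᵀ * Matrix.J (Fin n) ℝ + Matrix.J (Fin n) ℝ * B = 0)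
    (H : EuclideanSpace ℝ (Fin n ⊕ Fin n) → ℝ) (hH : Differentiable ℝ H)
    (hinv : ∀ x : EuclideanSpace ℝ (Fin n ⊕ Fin n),
      ⟪gradient H x, (WithLp.toLp 2 (B.mulVec x) : EuclideanSpace ℝ (Fin n ⊕ Fin n))⟫ = 0)
    (x : ℝ → EuclideanSpace ℝ (Fin n ⊕ Fin n))
    (hx : ∀ t : ℝ, HasDerivAt x
      (WithLp.toLp 2 ((Matrix.J (Fin n) ℝ).mulVec
        (gradient H (x t) : EuclideanSpace ℝ (Fin n ⊕ Fin n))) :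
          EuclideanSpace ℝ (Fin n ⊕ Fin n)) t) :
    ∀ t : ℝ,
      -(1 / 2 : ℝ) *
          ⟪x t, (WithLp.toLp 2 ((Matrix.J (Fin n) ℝ).mulVec (B.mulVec (x t))) :
            EuclideanSpace ℝ (Fin n ⊕ Fin n))⟫ =
        -(1 / 2 : ℝ) *
          ⟪x 0, (WithLp.toLp 2 ((Matrix.J (Fin n) ℝ).mulVec (B.mulVec (x 0))) :
            EuclideanSpace ℝ (Fin n ⊕ Fin n))⟫ := by
  set Jm := Matrix.J (Fin n) ℝ with hJm
  set A := Jm * B with hA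
  set L : EuclideanSpace ℝ (Fin n ⊕ Fin n) →L[ℝ] EuclideanSpace ℝ (Fin n ⊕ Fin n) :=
    LinearMap.toContinuousLinearMap (Matrix.toEuclideanLin A) with hL
  have hLapp : ∀ v : EuclideanSpace ℝ (Fin n ⊕ Fin n),
      L v = (WithLp.toLp 2 (A.mulVec v) : EuclideanSpace ℝ (Fin n ⊕ Fin n)) := fun v => rfl
  have hJB : A = -(Bᵀ * Jm) := eq_neg_of_add_eq_zero_right hB
  have zero1 : ∀ y g : EuclideanSpace ℝ (Fin n ⊕ Fin n),
      ⟪g, (WithLp.toLp 2 (B.mulVec y) : EuclideanSpace ℝ (Fin n ⊕ Fin n))⟫ = 0 →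
      (⟪y, L ((WithLp.toLp 2 (Jm.mulVec g) : EuclideanSpace ℝ (Fin n ⊕ Fin n)))⟫ : ℝ) = 0 := by
    intro y g hg
    rw [hLapp, euc_inner_eq_dot]
    simp only [WithLp.ofLp_toLp]
    rw [Matrix.mulVec_mulVec]
    have hAJ : A * Jm = Bᵀ := by
      rw [hJB, Matrix.neg_mul, mul_assoc, Matrix.J_squared]
      simp
    rw [hAJ, Matrix.dotProduct_mulVec, Matrix.vecMul_transpose, dotProduct_comm]
    rw [euc_inner_eq_dot] at hg
    simp only [WithLp.ofLp_toLp] at hg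
    exact hg
  have zero2 : ∀ y g : EuclideanSpace ℝ (Fin n ⊕ Fin n),
      ⟪g, (WithLp.toLp 2 (B.mulVec y) : EuclideanSpace ℝ (Fin n ⊕ Fin n))⟫ = 0 →
      (⟪L y, (WithLp.toLp 2 (Jm.mulVec g) : EuclideanSpace ℝ (Fin n ⊕ Fin n))⟫ : ℝ) = 0 := by
    intro y g hg
    rw [real_inner_comm, hLapp, euc_inner_eq_dot]
    simp only [WithLp.ofLp_toLp]
    rw [dot_mulVec_mulVec]
    have hJA : Jmᵀ * A = B := by
      rw [Matrix.J_transpose, hA, Matrix.neg_mul, ← mul_assoc, Matrix.J_squared]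
      simp
    rw [hJA]
    rw [euc_inner_eq_dot] at hg
    simp only [WithLp.ofLp_toLp] at hg
    exact hg
  have key : ∀ t : ℝ, HasDerivAt (fun t => ⟪x t, L (x t)⟫) 0 t := by
    intro t
    have hv := hx t
    set g : EuclideanSpace ℝ (Fin n ⊕ Fin n) := gradient H (x t) with hg
    set v : EuclideanSpace ℝ (Fin n ⊕ Fin n) := (WithLp.toLp 2 (Jm.mulVec g) : EuclideanSpace ℝ (Fin n ⊕ Fin n)) with hvv
    have hLx : HasDerivAt (fun s => L (x s)) (L v) t :=
      L.hasFDerivAt.comp_hasDerivAt t hv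
    have h := hv.inner ℝ hLx
    have hz : (⟪x t, L v⟫ + ⟪v, L (x t)⟫ : ℝ) = 0 := by
      rw [real_inner_comm (L (x t)) v, zero1 (x t) g (hinv (x t)),
        zero2 (x t) g (hinv (x t))]
      ring
    rw [hz] at h
    exact h
  intro t
  have hconst : (fun t => ⟪x t, L (x t)⟫) t = (fun t => ⟪x t, L (x t)⟫) 0 :=
    is_const_of_deriv_eq_zero (fun s => (key s).differentiableAt)
      (fun s => (key s).deriv) t 0
  simp only [hLapp] at hconst
  simp only [Matrix.mulVec_mulVec, ← hA]
  rw [hconst]
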